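/- Let R be a commutative ring, A : Matrix (Fin n) (Fin n) R, and d : Fin n → R. Then det (A + Matrix.diagonal d) = ∑ over subsets S ⊆ Fin n of (∏_{i ∈ S} d i) · det (A with all rows and columns indexed by S deleted), where the determinant of the empty matrix is 1. -/

import Mathlib

/-- Auxiliary: if the rows of `B` indexed by `S` are standard basis vectors, the
determinant of `B` equals the principal minor of `B` on `Sᶜ`. -/
lemma det_piecewise_single_aux {n : ℕ} {R : Type*} [CommRing R]
    (A : Matrix (Fin n) (Fin n) R) (S : Finset (Fin n)) :
    Matrix.det (S.piecewise (fun i => Pi.single i (1 : R)) A) =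
      (A.submatrix (fun j : {j : Fin n // j ∈ Sᶜ} => (j : Fin n))
        (fun j : {j : Fin n // j ∈ Sᶜ} => (j : Fin n))).det := by
  classical
  set N : Matrix (Fin n) (Fin n) R := S.piecewise (fun i => Pi.single i (1 : R)) A with hN
  let e : {j : Fin n // j ∈ Sᶜ} ⊕ {j : Fin n // j ∈ S} ≃ Fin n :=
    (Equiv.sumCongr (Equiv.subtypeEquivRight fun j => Finset.mem_compl)
      (Equiv.refl _)).trans ((Equiv.sumComm _ _).trans (Equiv.sumCompl (· ∈ S)))
  rw [← Matrix.det_submatrix_equiv_self e N]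
  have hblock : N.submatrix e e =
      Matrix.fromBlocks
        (A.submatrix (fun j : {j : Fin n // j ∈ Sᶜ} => (j : Fin n))
          (fun j : {j : Fin n // j ∈ Sᶜ} => (j : Fin n)))
        (A.submatrix (fun j : {j : Fin n // j ∈ Sᶜ} => (j : Fin n))
          (fun j : {j : Fin n // j ∈ S} => (j : Fin n)))
        0 1 := by
    have he₁ : ∀ i : {j : Fin n // j ∈ Sᶜ}, e (Sum.inl i) = (i : Fin n) := fun i => rfl
    have he₂ : ∀ i : {j : Fin n // j ∈ S}, e (Sum.inr i) = (i : Fin n) := fun i => rfl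
    ext i j
    cases i with
    | inl i =>
      have hi : (i : Fin n) ∉ S := Finset.mem_compl.mp i.2
      cases j with
      | inl j =>
        simp [Matrix.submatrix, he₁, hN, Finset.piecewise, hi]
      | inr j =>
        simp [Matrix.submatrix, he₁, he₂, hN, Finset.piecewise, hi]
    | inr i =>
      have hi : (i : Fin n) ∈ S := i.2
      cases j with
      | inl j =>
        have hj : (j : Fin n) ≠ (i : Fin n) := by
          intro h
          exact (Finset.mem_compl.mp j.2) (h ▸ hi)
        simp [Matrix.submatrix, he₁, he₂, hN, Finset.piecewise, hi,
          Pi.single_apply, hj]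
      | inr j =>
        show (S.piecewise (fun i => Pi.single i (1 : R)) A) (i : Fin n) (j : Fin n) = (1 : Matrix _ _ R) i j
        erw [Finset.piecewise_eq_of_mem _ _ _ hi]; rw [Pi.single_apply, Matrix.one_apply]
        by_cases h : i = j
        · subst h; simp
        · have h' : (j : Fin n) ≠ (i : Fin n) := fun h'' => h (Subtype.ext h''.symm)
          rw [if_neg h', if_neg h]
  rw [hblock, Matrix.det_fromBlocks_zero₂₁, Matrix.det_one, mul_one]

/-- `det (A + diagonal d)` expands as a sum over subsets `S` of the product of the
`d i` for `i ∈ S` times the principal minor of `A` with rows and columns in `S`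
deleted (the determinant of the empty matrix being `1`). -/
theorem det_add_diagonal_eq_sum_minors (n : ℕ) (R : Type*) [CommRing R]
    (A : Matrix (Fin n) (Fin n) R) (d : Fin n → R) :
    (A + Matrix.diagonal d).det =
      ∑ S : Finset (Fin n), (∏ i ∈ S, d i) *
        (A.submatrix (fun j : {j : Fin n // j ∈ Sᶜ} => (j : Fin n))
          (fun j : {j : Fin n // j ∈ Sᶜ} => (j : Fin n))).det := by
  classical
  have hadd : A + Matrix.diagonal d = Matrix.diagonal d + A := add_comm _ _
  have hmain := MultilinearMap.map_add_univ
    (Matrix.detRowAlternating (R := R) (n := Fin n)).toMultilinearMap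
    (Matrix.diagonal d) A
  have hdet : (A + Matrix.diagonal d).det =
      ∑ S : Finset (Fin n), Matrix.det (S.piecewise (Matrix.diagonal d) A) := by
    rw [hadd]
    exact hmain
  rw [hdet]
  refine Finset.sum_congr rfl fun S _ => ?_
  set N : Matrix (Fin n) (Fin n) R := S.piecewise (fun i => Pi.single i (1 : R)) A with hN
  have hpw : S.piecewise (Matrix.diagonal d) A = S.piecewise (fun i => d i • N i) N := by
    funext i j
    by_cases hi : i ∈ S
    · erw [hN, Finset.piecewise_eq_of_mem _ _ _ hi, Finset.piecewise_eq_of_mem _ _ _ hi,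
        Finset.piecewise_eq_of_mem _ _ _ hi]
      by_cases hj : i = j
      · subst hj; simp
      · simp [Matrix.diagonal_apply_ne _ hj, Pi.single_apply, Ne.symm hj]
    · simp [hN, Finset.piecewise, hi]
  have hsmul := MultilinearMap.map_piecewise_smul
    (Matrix.detRowAlternating (R := R) (n := Fin n)).toMultilinearMap d N S
  calc Matrix.det (S.piecewise (Matrix.diagonal d) A)
      = Matrix.detRowAlternating (S.piecewise (fun i => d i • N i) N) := by rw [hpw]; rfl
    _ = (∏ i ∈ S, d i) • Matrix.detRowAlternating N := hsmul
    _ = (∏ i ∈ S, d i) * Matrix.det N := by rw [smul_eq_mul]; rfl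
    _ = _ := by rw [det_piecewise_single_aux]
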